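/- Let U be a metric space, s : U → E continuous into a topological space E with a continuous map 0 : U → E, let F' ⊆ F be subsets of a topological space X, and ψ : s⁻¹(0) → F a homeomorphism onto F (where s⁻¹(0) = {x : s(x) = 0(x)} carries the subspace topology), with F' open in F. Define U' := {x ∈ V : d(x, ψ⁻¹(F')) < d(x, ψ⁻¹(F \ F'))} where V ⊆ U is any open set with V ∩ s⁻¹(0) = ψ⁻¹(F'). Then U' is open, U' ∩ s⁻¹(0) = ψ⁻¹(F'), and the closure of U' intersects s⁻¹(0) in a subset of the closure of ψ⁻¹(F') in s⁻¹(0). -/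

import Mathlib

theorem restriction_of_chart_domain
    {U E X : Type*} [MetricSpace U] [TopologicalSpace E] [TopologicalSpace X]
    (s z : U → E) (hs : Continuous s) (hz : Continuous z)
    (ψ : U → X) (F F' : Set X) (hF'F : F' ⊆ F)
    (Z : Set U) (hZdef : Z = {x | s x = z x})
    (hemb : Topology.IsEmbedding (fun x : Z => ψ x))
    (himg : ψ '' Z = F)
    (hopen : ∃ O : Set X, IsOpen O ∧ F' = O ∩ F)
    (V : Set U) (hV : IsOpen V) (hVZ : V ∩ Z = Z ∩ ψ ⁻¹' F')
    (U' : Set U)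
    (hU' : U' = {x ∈ V |
      EMetric.infEdist x (Z ∩ ψ ⁻¹' F') < EMetric.infEdist x (Z ∩ ψ ⁻¹' (F \ F'))}) :
    IsOpen U' ∧ U' ∩ Z = Z ∩ ψ ⁻¹' F' ∧
      closure U' ∩ Z ⊆ closure (Z ∩ ψ ⁻¹' F') := by
  set A := Z ∩ ψ ⁻¹' F' with hA
  set B := Z ∩ ψ ⁻¹' (F \ F') with hB
  obtain ⟨O, hO, hF'O⟩ := hopen
  have hmemF : ∀ x ∈ Z, ψ x ∈ F := fun x hx => himg ▸ Set.mem_image_of_mem ψ hx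
  have hA' : (Subtype.val ⁻¹' (ψ ⁻¹' F') : Set Z) = (fun y : Z => ψ ↑y) ⁻¹' O := by
    ext y
    simp only [Set.mem_preimage]
    constructor
    · intro h; rw [hF'O] at h; exact h.1
    · intro h; rw [hF'O]; exact ⟨h, hmemF _ y.2⟩
  have hopenA' : IsOpen (Subtype.val ⁻¹' (ψ ⁻¹' F') : Set Z) := by
    rw [hA']; exact hO.preimage hemb.continuous
  obtain ⟨W, hWopen, hWeq⟩ := isOpen_induced_iff.mp hopenA'
  have hWB : ∀ w ∈ W, w ∉ B := by
    intro w hw hwB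
    have : (⟨w, hwB.1⟩ : Z) ∈ Subtype.val ⁻¹' W := hw
    rw [hWeq] at this
    exact hwB.2.2 this
  have hkey : ∀ x ∈ A, EMetric.infEdist x B ≠ 0 := by
    intro x hx h0
    have hxcl : x ∈ closure B := EMetric.mem_closure_iff_infEdist_zero.mpr h0
    have hxW : x ∈ W := by
      have : (⟨x, hx.1⟩ : Z) ∈ Subtype.val ⁻¹' (ψ ⁻¹' F') := hx.2
      rw [← hWeq] at this
      exact this
    obtain ⟨w, hwW, hwB⟩ := _root_.mem_closure_iff.mp hxcl W hWopen hxW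
    exact hWB w hwW hwB
  have hUeq : U' = V ∩ {x | EMetric.infEdist x A < EMetric.infEdist x B} := by
    rw [hU']; rfl
  refine ⟨?_, ?_, ?_⟩
  · rw [hUeq]
    exact hV.inter (isOpen_lt EMetric.continuous_infEdist EMetric.continuous_infEdist)
  · apply Set.Subset.antisymm
    · intro x hx
      rw [← hVZ]
      exact ⟨(hUeq ▸ hx.1).1, hx.2⟩
    · intro x hx
      have hxV : x ∈ V := ((hVZ ▸ hx) : x ∈ V ∩ Z).1
      refine ⟨?_, hx.1⟩
      rw [hUeq]
      refine ⟨hxV, ?_⟩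
      show EMetric.infEdist x A < EMetric.infEdist x B
      rw [show EMetric.infEdist x A = 0 from EMetric.infEdist_zero_of_mem hx]
      exact pos_iff_ne_zero.mpr (hkey x hx)
  · rintro x ⟨hxcl, hxZ⟩
    by_cases hxF' : ψ x ∈ F'
    · exact subset_closure ⟨hxZ, hxF'⟩
    · have hxB : x ∈ B := ⟨hxZ, hmemF x hxZ, hxF'⟩
      have hzero : EMetric.infEdist x A = 0 := by
        by_contra h
        have hpos : 0 < EMetric.infEdist x A := pos_iff_ne_zero.mpr h
        have hhalf : 0 < EMetric.infEdist x A / 2 := ENNReal.half_pos h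
        obtain ⟨y, hyU', hyd⟩ := EMetric.mem_closure_iff.mp hxcl _ hhalf
        rw [hUeq] at hyU'
        have h1 : EMetric.infEdist x A ≤ edist x y + EMetric.infEdist y A :=
          EMetric.infEdist_le_edist_add_infEdist
        have h2 : EMetric.infEdist y B ≤ edist y x + EMetric.infEdist x B :=
          EMetric.infEdist_le_edist_add_infEdist
        rw [show EMetric.infEdist x B = 0 from EMetric.infEdist_zero_of_mem hxB, add_zero] at h2
        have h3 : EMetric.infEdist x A < edist x y + edist y x := by
          calc EMetric.infEdist x A ≤ edist x y + EMetric.infEdist y A := h1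
            _ < edist x y + EMetric.infEdist y B :=
              ENNReal.add_lt_add_left (edist_ne_top x y) hyU'.2
            _ ≤ edist x y + edist y x := add_le_add_right h2 _
        have h4 : edist x y + edist y x <
            EMetric.infEdist x A / 2 + EMetric.infEdist x A / 2 := by
          rw [edist_comm y x]
          exact ENNReal.add_lt_add hyd hyd
        rw [ENNReal.add_halves] at h4
        exact absurd (h3.trans h4) (lt_irrefl _)
      exact EMetric.mem_closure_iff_infEdist_zero.mpr hzero
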